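/- Let u = u_1⋯u_k and v = v_1⋯v_ℓ be finite words of real numbers. If M_z(u) = M_z(v) for all z ∈ ℂ, then u = v; that is, k = ℓ and u_j = v_j for all 1 ≤ j ≤ k. -/
import Mathlib

open Polynomial

/-- A single transfer matrix `M_z(a) = [[z − a, −1],[1, 0]]`. -/
noncomputable def tMat (z : ℂ) (a : ℝ) : Matrix (Fin 2) (Fin 2) ℂ := !![z - a, -1; 1, 0]

/-- The transfer matrix over a finite word `w = a_1⋯a_n` (given as a list):
`M_z(w) = M_z(a_n)·M_z(a_{n−1})⋯M_z(a_1)`. -/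
noncomputable def tWordList (z : ℂ) (w : List ℝ) : Matrix (Fin 2) (Fin 2) ℂ :=
  (w.reverse.map (tMat z)).prod

/-- Polynomial version of a single transfer matrix. -/
noncomputable def pMat (a : ℝ) : Matrix (Fin 2) (Fin 2) (Polynomial ℂ) :=
  !![X - C (a : ℂ), -1; 1, 0]

/-- Polynomial version of the word transfer matrix. -/
noncomputable def pWord (w : List ℝ) : Matrix (Fin 2) (Fin 2) (Polynomial ℂ) :=
  (w.reverse.map pMat).prod

lemma pWord_nil : pWord ([] : List ℝ) = 1 := by
  simp [pWord]

lemma pWord_concat (w : List ℝ) (a : ℝ) : pWord (w ++ [a]) = pMat a * pWord w := by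
  simp [pWord]

lemma eval_pWord (z : ℂ) (w : List ℝ) :
    (pWord w).map (Polynomial.eval z) = tWordList z w := by
  have : (pWord w).map (Polynomial.eval z)
      = (Polynomial.evalRingHom z).mapMatrix (pWord w) := rfl
  rw [this, pWord, tWordList, map_list_prod]
  congr 1
  rw [List.map_map]
  apply List.map_congr_left
  intro a _
  ext i j
  fin_cases i <;> fin_cases j <;>
    simp [pMat, tMat]

lemma pWord_entries (w : List ℝ) (a : ℝ) :
    (pWord (w ++ [a]) 0 0 = (X - C (a:ℂ)) * pWord w 0 0 - pWord w 1 0) ∧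
    (pWord (w ++ [a]) 0 1 = (X - C (a:ℂ)) * pWord w 0 1 - pWord w 1 1) ∧
    (pWord (w ++ [a]) 1 0 = pWord w 0 0) ∧
    (pWord (w ++ [a]) 1 1 = pWord w 0 1) := by
  rw [pWord_concat]
  refine ⟨?_, ?_, ?_, ?_⟩ <;>
    simp [pMat, Matrix.mul_apply, Fin.sum_univ_two] <;> ring

lemma pWord_deg (w : List ℝ) :
    (pWord w 0 0).Monic ∧ (pWord w 0 0).natDegree = w.length ∧
    (pWord w 1 0).degree < (w.length : WithBot ℕ) := by
  induction w using List.reverseRecOn with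
  | nil =>
    rw [pWord_nil]
    refine ⟨?_, ?_, ?_⟩ <;> simp [Matrix.one_apply]
  | append_singleton w a ih =>
    obtain ⟨hm, hd, hlt⟩ := ih
    obtain ⟨h00, _, h10, _⟩ := pWord_entries w a
    have hPdeg : (pWord w 0 0).degree = (w.length : WithBot ℕ) := by
      rw [degree_eq_natDegree hm.ne_zero, hd]
    have hmonX : ((X - C (a:ℂ)) * pWord w 0 0).Monic :=
      (monic_X_sub_C _).mul hm
    have hdegX : ((X - C (a:ℂ)) * pWord w 0 0).degree = ((w.length + 1 : ℕ) : WithBot ℕ) := by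
      rw [degree_mul, degree_X_sub_C, hPdeg]
      push_cast
      ring
    have hlt' : (-(pWord w 1 0)).degree < ((X - C (a:ℂ)) * pWord w 0 0).degree := by
      rw [degree_neg, hdegX]
      exact hlt.trans_le (by exact_mod_cast Nat.cast_le.mpr (Nat.le_succ _))
    constructor
    · rw [h00, sub_eq_add_neg]
      exact hmonX.add_of_left hlt'
    constructor
    · rw [h00, sub_eq_add_neg]
      have := degree_add_eq_left_of_degree_lt hlt'
      rw [List.length_append, List.length_singleton]
      have hdeg : ((X - C (a:ℂ)) * pWord w 0 0 + -(pWord w 1 0)).degree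
          = ((w.length + 1 : ℕ) : WithBot ℕ) := by rw [this, hdegX]
      exact natDegree_eq_of_degree_eq_some hdeg
    · rw [h10, hPdeg]
      rw [List.length_append, List.length_singleton]
      exact_mod_cast Nat.cast_lt.mpr (Nat.lt_succ_self _)

lemma pWord_inj : ∀ u v : List ℝ, pWord u = pWord v → u = v := by
  intro u
  induction u using List.reverseRecOn with
  | nil =>
    intro v h
    obtain ⟨_, hd, _⟩ := pWord_deg v
    rw [← h] at hd
    obtain ⟨_, hd0, _⟩ := pWord_deg ([] : List ℝ)
    rw [hd0] at hd
    exact (List.eq_nil_of_length_eq_zero hd.symm).symm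
  | append_singleton u' a ih =>
    intro v h
    -- lengths agree
    obtain ⟨hmu, hdu, hQu⟩ := pWord_deg (u' ++ [a])
    obtain ⟨hmv, hdv, hQv⟩ := pWord_deg v
    have hlen : (u' ++ [a]).length = v.length := by
      rw [← hdu, ← hdv, h]
    -- v is nonempty, write v = v' ++ [b]
    rcases v.eq_nil_or_concat with rfl | ⟨v', b, rfl⟩
    · simp at hlen
    rw [List.concat_eq_append] at h hmv hdv hQv hlen ⊢
    obtain ⟨hu00, hu01, hu10, hu11⟩ := pWord_entries u' a
    obtain ⟨hv00, hv01, hv10, hv11⟩ := pWord_entries v' b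
    have e00 : pWord (u' ++ [a]) 0 0 = pWord (v' ++ [b]) 0 0 := by rw [h]
    have e01 : pWord (u' ++ [a]) 0 1 = pWord (v' ++ [b]) 0 1 := by rw [h]
    have e10 : pWord (u' ++ [a]) 1 0 = pWord (v' ++ [b]) 1 0 := by rw [h]
    have e11 : pWord (u' ++ [a]) 1 1 = pWord (v' ++ [b]) 1 1 := by rw [h]
    have hP : pWord u' 0 0 = pWord v' 0 0 := by rw [← hu10, ← hv10, e10]
    have hP1 : pWord u' 0 1 = pWord v' 0 1 := by rw [← hu11, ← hv11, e11]
    obtain ⟨hmu', hdu', hQu'⟩ := pWord_deg u'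
    obtain ⟨hmv', hdv', hQv'⟩ := pWord_deg v'
    have hlen' : u'.length = v'.length := by simpa using hlen
    have hkey : C ((b:ℂ) - (a:ℂ)) * pWord u' 0 0
        = pWord u' 1 0 - pWord v' 1 0 := by
      have h0 := e00
      rw [hu00, hv00, ← hP] at h0
      rw [C_sub]
      linear_combination h0
    -- show a = b
    have hab : a = b := by
      by_contra hne
      have hc : ((b:ℂ) - (a:ℂ)) ≠ 0 := by
        simp only [ne_eq, sub_eq_zero]
        exact_mod_cast fun hh => hne (by exact_mod_cast hh.symm)
      have hdegL : (C ((b:ℂ) - (a:ℂ)) * pWord u' 0 0).degree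
          = (u'.length : WithBot ℕ) := by
        rw [degree_C_mul hc, degree_eq_natDegree hmu'.ne_zero, hdu']
      have hdegR : (pWord u' 1 0 - pWord v' 1 0).degree < (u'.length : WithBot ℕ) := by
        calc (pWord u' 1 0 - pWord v' 1 0).degree
            ≤ max (pWord u' 1 0).degree (pWord v' 1 0).degree := degree_sub_le _ _
          _ < (u'.length : WithBot ℕ) := by
              rw [max_lt_iff]
              exact ⟨hQu', by rw [hlen']; exact hQv'⟩
      rw [← hkey, hdegL] at hdegR
      exact lt_irrefl _ hdegR
    subst hab
    have hQ : pWord u' 1 0 = pWord v' 1 0 := by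
      have h0 := hkey
      simp only [sub_self, map_zero, zero_mul] at h0
      linear_combination -h0
    have hQ1 : pWord u' 1 1 = pWord v' 1 1 := by
      have h0 := e01
      rw [hu01, hv01, ← hP1] at h0
      linear_combination -h0
    have hEq : pWord u' = pWord v' := by
      refine Matrix.ext fun i j => ?_
      fin_cases i <;> fin_cases j
      · exact hP
      · exact hP1
      · exact hQ
      · exact hQ1
    rw [ih v' hEq]

theorem transfer_matrices_determine_word
    (u v : List ℝ) (h : ∀ z : ℂ, tWordList z u = tWordList z v) : u = v := by
  apply pWord_inj
  refine Matrix.ext fun i j => ?_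
  apply Polynomial.funext
  intro z
  have := h z
  rw [← eval_pWord z u, ← eval_pWord z v] at this
  have := congrFun (congrFun this i) j
  simpa [Matrix.map_apply] using this
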